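/- Under condition H1, sup_{t∈(0,1]} t^{1−2/α} ∫_{{u : |u| ≤ t^{1/α}}} u² m(u) du < ∞. -/

import Mathlib

open MeasureTheory Real Filter Set Topology

lemma aux_abs_rpow {p s : ℝ} (hp : -1 < p) (hs : 0 ≤ s) :
    IntegrableOn (fun u : ℝ => |u| ^ p) (Icc (-s) s) ∧
    ∫ u in Icc (-s) s, |u| ^ p = 2 * (s ^ (p + 1) / (p + 1)) := by
  have hp1 : 0 < p + 1 := by linarith
  have h1 : IntervalIntegrable (fun x : ℝ => x ^ p) volume 0 s :=
    intervalIntegral.intervalIntegrable_rpow' hp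
  have h2 : IntervalIntegrable (fun x : ℝ => |x| ^ p) volume 0 s := by
    rw [intervalIntegrable_iff_integrableOn_Ioc_of_le hs] at h1 ⊢
    exact h1.congr_fun (fun u hu => by rw [abs_of_pos hu.1]) measurableSet_Ioc
  have h3 : IntervalIntegrable (fun x : ℝ => |x| ^ p) volume (-s) 0 := by
    rw [IntervalIntegrable.iff_comp_neg]
    simpa [abs_neg] using h2.symm
  have h4 : IntervalIntegrable (fun x : ℝ => |x| ^ p) volume (-s) s := h3.trans h2
  have hns : -s ≤ s := by linarith
  have hIcc : IntegrableOn (fun u : ℝ => |u| ^ p) (Icc (-s) s) := by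
    have := (intervalIntegrable_iff_integrableOn_Ioc_of_le hns).mp h4
    exact this.congr_set_ae Ioc_ae_eq_Icc.symm
  refine ⟨hIcc, ?_⟩
  have hneg : (∫ x in (-s)..(0:ℝ), |x| ^ p) = ∫ x in (0:ℝ)..s, |x| ^ p := by
    have := intervalIntegral.integral_comp_neg (a := (0:ℝ)) (b := s)
      (fun x : ℝ => |x| ^ p)
    simpa [abs_neg] using this.symm
  have hpos : (∫ x in (0:ℝ)..s, |x| ^ p) = s ^ (p + 1) / (p + 1) := by
    rw [intervalIntegral.integral_congr (g := fun x : ℝ => x ^ p)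
      (fun u hu => by
        rw [uIcc_of_le hs] at hu
        simp [abs_of_nonneg hu.1])]
    rw [integral_rpow (Or.inl hp), Real.zero_rpow (by linarith)]
    ring
  calc ∫ u in Icc (-s) s, |u| ^ p = ∫ u in Ioc (-s) s, |u| ^ p :=
        integral_Icc_eq_integral_Ioc
    _ = ∫ x in (-s)..s, |x| ^ p := (intervalIntegral.integral_of_le hns).symm
    _ = (∫ x in (-s)..(0:ℝ), |x| ^ p) + ∫ x in (0:ℝ)..s, |x| ^ p :=
        (intervalIntegral.integral_add_adjacent_intervals h3 h2).symm
    _ = 2 * (s ^ (p + 1) / (p + 1)) := by rw [hneg, hpos]; ring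

lemma aux_key (α K s : ℝ) (hα1 : 0 < α) (hα2 : α < 2) (hK : 0 ≤ K) (hs : 0 ≤ s)
    (m : ℝ → ℝ)
    (hint : IntegrableOn (fun u => u ^ 2 * m u) (Icc (-s) s))
    (hbound : ∀ u ∈ Icc (-s) s, u ^ 2 * m u ≤ K * |u| ^ (1 - α)) :
    ∫ u in Icc (-s) s, u ^ 2 * m u ≤ K * (2 / (2 - α)) * s ^ (2 - α) := by
  have hp : (-1 : ℝ) < 1 - α := by linarith
  obtain ⟨hIa, hval⟩ := aux_abs_rpow hp hs
  have he : (1 - α) + 1 = 2 - α := by ring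
  calc ∫ u in Icc (-s) s, u ^ 2 * m u
      ≤ ∫ u in Icc (-s) s, K * |u| ^ (1 - α) :=
        setIntegral_mono_on hint (hIa.const_mul K) measurableSet_Icc hbound
    _ = K * ∫ u in Icc (-s) s, |u| ^ (1 - α) := integral_const_mul K _
    _ = K * (2 * (s ^ (2 - α) / (2 - α))) := by rw [hval, he]
    _ = K * (2 / (2 - α)) * s ^ (2 - α) := by ring

/-- Under condition H1, `sup_{t ∈ (0,1]} t^{1-2/α} ∫_{|u| ≤ t^{1/α}} u² m(u) du < ∞`. -/
theorem statement8 (α Cp Cm : ℝ) (hα : α ∈ Set.Ioo (0 : ℝ) 2)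
    (hCp0 : 0 ≤ Cp) (hCm0 : 0 ≤ Cm) (hC : 0 < Cp + Cm)
    (m : ℝ → ℝ) (hm_meas : Measurable m) (hm_nonneg : ∀ u, 0 ≤ m u)
    (hm_int : Integrable (fun u => min 1 (u ^ 2) * m u))
    (hlimp : Tendsto (fun u => u ^ (α + 1) * m u) (𝓝[>] (0 : ℝ)) (𝓝 Cp))
    (hlimm : Tendsto (fun u => |u| ^ (α + 1) * m u) (𝓝[<] (0 : ℝ)) (𝓝 Cm)) :
    ∃ M : ℝ, ∀ t ∈ Set.Ioc (0 : ℝ) 1,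
      t ^ (1 - 2 / α) * ∫ u in {u : ℝ | |u| ≤ t ^ (1 / α)}, u ^ 2 * m u ≤ M := by
  obtain ⟨hα1, hα2⟩ := hα
  set K : ℝ := max Cp Cm + 1 with hKdef
  have hK0 : 0 ≤ K := by positivity
  have hCpK : Cp < K := by
    have := le_max_left Cp Cm; rw [hKdef]; linarith
  have hCmK : Cm < K := by
    have := le_max_right Cp Cm; rw [hKdef]; linarith
  have h1 := hlimp.eventually_lt_const hCpK
  have h2 := hlimm.eventually_lt_const hCmK
  obtain ⟨δ1, hδ1, hsub1⟩ := mem_nhdsGT_iff_exists_Ioo_subset.mp h1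
  obtain ⟨δ2, hδ2, hsub2⟩ := mem_nhdsLT_iff_exists_Ioo_subset.mp h2
  rw [mem_Ioi] at hδ1
  rw [mem_Iio] at hδ2
  set δ : ℝ := min (min (δ1 / 2) (-δ2 / 2)) 1 with hδdef
  have hδpos : 0 < δ := by
    apply lt_min (lt_min (by linarith) (by linarith)) one_pos
  have hδδ1 : δ < δ1 := lt_of_le_of_lt ((min_le_left _ _).trans (min_le_left _ _)) (by linarith)
  have hδδ2 : δ2 < -δ := by
    have : δ ≤ -δ2 / 2 := (min_le_left _ _).trans (min_le_right _ _)
    linarith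
  have hδ1' : δ ≤ 1 := min_le_right _ _
  -- pointwise bound near zero
  have hKb : ∀ u : ℝ, |u| ≤ δ → u ^ 2 * m u ≤ K * |u| ^ (1 - α) := by
    intro u hu
    rcases lt_trichotomy u 0 with h | h | h
    · have hmem : u ∈ Ioo δ2 0 := ⟨by have := (abs_le.mp hu).1; linarith, h⟩
      have hb : |u| ^ (α + 1) * m u < K := hsub2 hmem
      have habs : (0 : ℝ) < |u| := abs_pos.mpr h.ne
      have hid : u ^ 2 * m u = |u| ^ (1 - α) * (|u| ^ (α + 1) * m u) := by
        rw [← mul_assoc, ← Real.rpow_add habs]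
        rw [show (1 : ℝ) - α + (α + 1) = (2 : ℕ) by push_cast; ring,
          Real.rpow_natCast, sq_abs]
      rw [hid]
      calc |u| ^ (1 - α) * (|u| ^ (α + 1) * m u) ≤ |u| ^ (1 - α) * K :=
            mul_le_mul_of_nonneg_left hb.le (Real.rpow_nonneg (abs_nonneg u) _)
        _ = K * |u| ^ (1 - α) := mul_comm _ _
    · subst h; simp [Real.rpow_natCast]
      positivity
    · have hmem : u ∈ Ioo 0 δ1 := ⟨h, lt_of_le_of_lt (abs_le.mp hu).2 hδδ1⟩
      have hb : u ^ (α + 1) * m u < K := hsub1 hmem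
      have hid : u ^ 2 * m u = u ^ ((1 : ℝ) - α) * (u ^ (α + 1) * m u) := by
        rw [← mul_assoc, ← Real.rpow_add h]
        rw [show (1 : ℝ) - α + (α + 1) = (2 : ℕ) by push_cast; ring,
          Real.rpow_natCast]
      rw [hid, abs_of_pos h]
      calc u ^ ((1 : ℝ) - α) * (u ^ (α + 1) * m u) ≤ u ^ ((1 : ℝ) - α) * K :=
            mul_le_mul_of_nonneg_left hb.le (Real.rpow_nonneg h.le _)
        _ = K * u ^ ((1 : ℝ) - α) := mul_comm _ _
  -- integrability on small intervals
  have hIr : ∀ r : ℝ, r ≤ 1 → IntegrableOn (fun u => u ^ 2 * m u) (Icc (-r) r) := by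
    intro r hr1
    refine (hm_int.integrableOn).congr_fun (fun u hu => ?_) measurableSet_Icc
    have h1 : |u| ≤ 1 := by
      rw [abs_le]; exact ⟨by linarith [hu.1], le_trans hu.2 hr1⟩
    have : u ^ 2 ≤ 1 := by
      rw [← sq_abs]; nlinarith [abs_nonneg u]
    simp [min_eq_right this]
  set I : ℝ := ∫ u, min 1 (u ^ 2) * m u with hIdef
  have hI0 : 0 ≤ I :=
    integral_nonneg fun u => mul_nonneg (le_min zero_le_one (sq_nonneg u)) (hm_nonneg u)
  refine ⟨K * (2 / (2 - α)) + δ ^ (α - 2) * I, fun t ht => ?_⟩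
  obtain ⟨ht0, ht1⟩ := ht
  set r : ℝ := t ^ (1 / α) with hrdef
  have hr0 : 0 < r := Real.rpow_pos_of_pos ht0 _
  have hr1 : r ≤ 1 := Real.rpow_le_one ht0.le ht1 (by positivity)
  have hset : {u : ℝ | |u| ≤ r} = Icc (-r) r := by ext u; simp [abs_le]
  rw [hset]
  have htpow0 : 0 < t ^ (1 - 2 / α) := Real.rpow_pos_of_pos ht0 _
  have hA0 : 0 ≤ K * (2 / (2 - α)) :=
    mul_nonneg hK0 (div_nonneg (by norm_num) (by linarith))
  have hδp0 : (0:ℝ) ≤ δ ^ (α - 2) := Real.rpow_nonneg hδpos.le _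
  have hα0 : α ≠ 0 := ne_of_gt hα1
  have hexp : (1 - 2 / α) + 1 / α * (2 - α) = 0 := by field_simp; ring
  have hrpow : t ^ (1 - 2 / α) * r ^ (2 - α) = 1 := by
    rw [hrdef, ← Real.rpow_mul ht0.le, ← Real.rpow_add ht0, hexp, Real.rpow_zero]
  rcases le_or_gt r δ with hc | hc
  · have hb : ∀ u ∈ Icc (-r) r, u ^ 2 * m u ≤ K * |u| ^ (1 - α) := fun u hu =>
      hKb u (le_trans (abs_le.mpr ⟨hu.1, hu.2⟩) hc)
    have hkey := aux_key α K r hα1 hα2 hK0 hr0.le m (hIr r hr1) hb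
    calc t ^ (1 - 2 / α) * ∫ u in Icc (-r) r, u ^ 2 * m u
        ≤ t ^ (1 - 2 / α) * (K * (2 / (2 - α)) * r ^ (2 - α)) :=
          mul_le_mul_of_nonneg_left hkey htpow0.le
      _ = K * (2 / (2 - α)) * (t ^ (1 - 2 / α) * r ^ (2 - α)) := by ring
      _ = K * (2 / (2 - α)) := by rw [hrpow, mul_one]
      _ ≤ K * (2 / (2 - α)) + δ ^ (α - 2) * I :=
          le_add_of_nonneg_right (mul_nonneg hδp0 hI0)
  · have hδr : Icc (-δ) δ ⊆ Icc (-r) r := Icc_subset_Icc (by linarith) hc.le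
    have hmdiff : MeasurableSet (Icc (-r) r \ Icc (-δ) δ) :=
      measurableSet_Icc.diff measurableSet_Icc
    have hint_r := hIr r hr1
    have hint_δ : IntegrableOn (fun u => u ^ 2 * m u) (Icc (-δ) δ) := hIr δ hδ1'
    have hint_d : IntegrableOn (fun u => u ^ 2 * m u) (Icc (-r) r \ Icc (-δ) δ) :=
      hint_r.mono_set diff_subset
    have hsplit : (∫ u in Icc (-r) r, u ^ 2 * m u) =
        (∫ u in Icc (-δ) δ, u ^ 2 * m u) +
          ∫ u in Icc (-r) r \ Icc (-δ) δ, u ^ 2 * m u := by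
      rw [← setIntegral_union disjoint_sdiff_self_right hmdiff hint_δ hint_d,
        union_diff_cancel hδr]
    have hkey := aux_key α K δ hα1 hα2 hK0 hδpos.le m hint_δ
      (fun u hu => hKb u (abs_le.mpr ⟨hu.1, hu.2⟩))
    have htail : (∫ u in Icc (-r) r \ Icc (-δ) δ, u ^ 2 * m u) ≤ I := by
      have heq : ∀ u ∈ Icc (-r) r \ Icc (-δ) δ, u ^ 2 * m u = min 1 (u ^ 2) * m u := by
        intro u hu
        have h1 : |u| ≤ 1 := le_trans (abs_le.mpr ⟨hu.1.1, hu.1.2⟩) hr1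
        have : u ^ 2 ≤ 1 := by rw [← sq_abs]; nlinarith [abs_nonneg u]
        rw [min_eq_right this]
      rw [setIntegral_congr_fun hmdiff heq]
      exact setIntegral_le_integral hm_int (Eventually.of_forall fun u =>
        mul_nonneg (le_min zero_le_one (sq_nonneg u)) (hm_nonneg u))
    have hδα : δ ^ α < t := by
      have h1 : δ ^ α < r ^ α := Real.rpow_lt_rpow hδpos.le hc hα1
      have h2 : r ^ α = t := by
        rw [hrdef, ← Real.rpow_mul ht0.le, one_div, inv_mul_cancel₀ hα0, Real.rpow_one]
      linarith
    have htδ : t ^ (1 - 2 / α) ≤ δ ^ (α - 2) := by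
      have hexp2 : 1 - 2 / α ≤ 0 := by
        have : 1 ≤ 2 / α := (one_le_div hα1).mpr (by linarith)
        linarith
      have h1 : t ^ (1 - 2 / α) ≤ (δ ^ α) ^ (1 - 2 / α) :=
        Real.rpow_le_rpow_of_nonpos (Real.rpow_pos_of_pos hδpos _) hδα.le hexp2
      have h2 : (δ ^ α) ^ (1 - 2 / α) = δ ^ (α - 2) := by
        rw [← Real.rpow_mul hδpos.le]; congr 1; field_simp
      linarith
    have hnn : 0 ≤ ∫ u in Icc (-r) r, u ^ 2 * m u :=
      setIntegral_nonneg measurableSet_Icc fun u _ =>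
        mul_nonneg (sq_nonneg u) (hm_nonneg u)
    calc t ^ (1 - 2 / α) * ∫ u in Icc (-r) r, u ^ 2 * m u
        ≤ δ ^ (α - 2) * (K * (2 / (2 - α)) * δ ^ (2 - α) + I) := by
          apply mul_le_mul htδ ?_ hnn hδp0
          rw [hsplit]; exact add_le_add hkey htail
      _ = K * (2 / (2 - α)) * (δ ^ (α - 2) * δ ^ (2 - α)) + δ ^ (α - 2) * I := by ring
      _ = K * (2 / (2 - α)) + δ ^ (α - 2) * I := by
          rw [← Real.rpow_add hδpos, show α - 2 + (2 - α) = 0 by ring,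
            Real.rpow_zero, mul_one]
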